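/- Let R > 1, α ∈ ℝ, and set t = 2 sin((u−α)/2), s = 2(R+cos α) sin(v/2). Then |p(u,v) − p(α,0)|² = t² + s² − (cos α/(2(R+cos α)))·t²s² − (sin α/(2(R+cos α)))·s²·t·√(4−t²), provided (u−α)/2 ∈ [−π/2, π/2] so that √(4−t²) = 2 cos((u−α)/2). -/

import Mathlib

open Real

noncomputable def torusParam (R u v : ℝ) : EuclideanSpace ℝ (Fin 3) :=
  WithLp.toLp 2 ![(R + Real.cos u) * Real.cos v, (R + Real.cos u) * Real.sin v, Real.sin u]

theorem torus_dist_sq_ts (R : ℝ) (hR : 1 < R) (α u v : ℝ)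
    (hu : (u - α) / 2 ∈ Set.Icc (-(π/2)) (π/2)) :
    ‖torusParam R u v - torusParam R α 0‖^2
      = (2 * Real.sin ((u - α)/2))^2 + (2 * (R + Real.cos α) * Real.sin (v/2))^2
        - (Real.cos α / (2 * (R + Real.cos α))) * (2 * Real.sin ((u - α)/2))^2
            * (2 * (R + Real.cos α) * Real.sin (v/2))^2
        - (Real.sin α / (2 * (R + Real.cos α))) * (2 * (R + Real.cos α) * Real.sin (v/2))^2
            * (2 * Real.sin ((u - α)/2))
            * Real.sqrt (4 - (2 * Real.sin ((u - α)/2))^2) := by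
  set θ := (u - α) / 2 with hθ
  set st := Real.sin θ with hst
  set ct := Real.cos θ with hct
  set sv := Real.sin (v/2) with hsv
  set cv := Real.cos (v/2) with hcv
  have hc : 0 ≤ ct := Real.cos_nonneg_of_mem_Icc hu
  have hB : R + Real.cos α ≠ 0 := by nlinarith [Real.neg_one_le_cos α]
  have e1 : st^2 + ct^2 = 1 := Real.sin_sq_add_cos_sq θ
  have e2 : sv^2 + cv^2 = 1 := Real.sin_sq_add_cos_sq (v/2)
  have e3 : Real.sin α^2 + Real.cos α^2 = 1 := Real.sin_sq_add_cos_sq α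
  have hsqrt : Real.sqrt (4 - (2 * st)^2) = 2 * ct := by
    have h1 : 4 - (2 * st)^2 = (2 * ct)^2 := by nlinarith
    rw [h1, Real.sqrt_sq (by linarith)]
  have hnorm : ‖torusParam R u v - torusParam R α 0‖^2
      = ((R + Real.cos u) * Real.cos v - (R + Real.cos α))^2
        + ((R + Real.cos u) * Real.sin v)^2
        + (Real.sin u - Real.sin α)^2 := by
    have h := EuclideanSpace.norm_eq (𝕜 := ℝ) (torusParam R u v - torusParam R α 0)
    rw [h, Real.sq_sqrt (Finset.sum_nonneg fun i _ => by positivity)]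
    simp [torusParam, Fin.sum_univ_three, sq_abs]
  have hcu : Real.cos u = Real.cos α * (2 * ct^2 - 1) - Real.sin α * (2 * st * ct) := by
    rw [show u = α + 2 * θ by rw [hθ]; ring, Real.cos_add, Real.cos_two_mul, Real.sin_two_mul]
  have hsu : Real.sin u = Real.sin α * (2 * ct^2 - 1) + Real.cos α * (2 * st * ct) := by
    rw [show u = α + 2 * θ by rw [hθ]; ring, Real.sin_add, Real.cos_two_mul, Real.sin_two_mul]
  have hcvv : Real.cos v = 2 * cv^2 - 1 := by
    rw [show v = 2 * (v/2) by ring, Real.cos_two_mul]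
  have hsvv : Real.sin v = 2 * sv * cv := by
    rw [show v = 2 * (v/2) by ring, Real.sin_two_mul]
  have hd1 : (Real.cos α / (2 * (R + Real.cos α))) * (2 * st)^2
      * (2 * (R + Real.cos α) * sv)^2
      = 8 * Real.cos α * (R + Real.cos α) * st^2 * sv^2 := by
    field_simp; ring
  have hd2 : (Real.sin α / (2 * (R + Real.cos α))) * (2 * (R + Real.cos α) * sv)^2
      * (2 * st) * (2 * ct)
      = 8 * Real.sin α * (R + Real.cos α) * sv^2 * st * ct := by
    field_simp; ring
  rw [hnorm, hsqrt, hd2, hcu, hsu, hcvv, hsvv]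
  rw [show (Real.cos α / (2 * (R + Real.cos α))) * (2 * st)^2
      * (2 * (R + Real.cos α) * sv)^2
      = 8 * Real.cos α * (R + Real.cos α) * st^2 * sv^2 from hd1]
  set A := R + (Real.cos α * (2 * ct^2 - 1) - Real.sin α * (2 * st * ct)) with hA
  set B := R + Real.cos α with hBdef
  linear_combination (4*A^2*cv^2 - 4*A*B) * e2 + (4*st^2) * e3
    + ((Real.sin α^2 + Real.cos α^2) * (4*ct^2 - 4) + 8*B*sv^2*Real.cos α) * e1
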